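/- Kleisli composition of H₀M is monotone in the function argument: for all f, g : X → H₀M Y with f x ⊑ g x for every x ∈ X, and every (d,e) ∈ H₀M X, one has f^†(d,e) ⊑ g^†(d,e). -/

import Mathlib

open scoped ENNReal NNReal
open Classical

universe u v w

/-- Raw trajectories: a duration in `ℝ≥0∞` and a partial evolution `ℝ≥0 → Option X`. -/
abbrev Traj (X : Type u) := ℝ≥0∞ × (ℝ≥0 → Option X)

/-- The flattening condition: if the duration is finite, the evolution is constant
from the duration onwards.  Membership in `H₀M X` means exactly `Flat`. -/
def Flat {X : Type u} (p : Traj X) : Prop :=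
  ∀ t : ℝ≥0, p.1 ≤ (t : ℝ≥0∞) → p.2 t = p.2 p.1.toNNReal

/-- The unit of `H₀M`. -/
def eta {X : Type u} (x : X) : Traj X := (0, fun _ => some x)

/-- The Kleisli lifting `f^†` of the monad `H₀M`. -/
noncomputable def kl {X : Type u} {Y : Type v} (f : X → Traj Y) (p : Traj X) : Traj Y :=
  if p.1 = ⊤ then (p.1, fun t => (p.2 t).bind fun x' => (f x').2 0)
  else
    match p.2 p.1.toNNReal with
    | none => (p.1, fun t => (p.2 t).bind fun x' => (f x').2 0)
    | some x =>
        (p.1 + (f x).1,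
          fun t =>
            if (t : ℝ≥0∞) < p.1 then (p.2 t).bind fun x' => (f x').2 0
            else (f x).2 (t - p.1.toNNReal))

/-- Membership in `H₊ X ⊆ H₀M X`: the evolution is not everywhere `none`, and it is
defined at every time instant strictly below the duration. -/
def memHp {X : Type u} (p : Traj X) : Prop :=
  p.2 ≠ (fun _ => none) ∧ ∀ t : ℝ≥0, (t : ℝ≥0∞) < p.1 → p.2 t ≠ none

/-- Membership in `H X ⊆ H₀M X`: either the evolution is total, or the duration is `∞`
and the domain of the evolution is downward closed. -/
def memH {X : Type u} (p : Traj X) : Prop :=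
  (∀ t, p.2 t ≠ none) ∨
    (p.1 = ⊤ ∧ ∀ s t : ℝ≥0, s ≤ t → p.2 t ≠ none → p.2 s ≠ none)

/-- The approximation order `⊑` on `H₀M X`. -/
def TrajLE {X : Type u} (p q : Traj X) : Prop :=
  p.1 ≤ q.1 ∧ (∀ t, p.2 t ≠ none → q.2 t = p.2 t) ∧
    (p.1 ≠ ⊤ → p.2 p.1.toNNReal ≠ none → p.1 = q.1)

/-- Join of an ω-chain in `H₀M X`: the duration is the supremum of the durations, and
the evolution at `t` is the common value `(c i).2 t` whenever it is `≠ none` for some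
`i`, and `none` otherwise. -/
noncomputable def chainJoin {X : Type u} (c : ℕ → Traj X) : Traj X :=
  (⨆ i, (c i).1,
    fun t => if h : ∃ i, (c i).2 t ≠ none then (c h.choose).2 t else none)

/-- `d⋆ = sup { s < d ∣ e is defined on [0, s) }`. -/
noncomputable def dstar {X : Type u} (p : Traj X) : ℝ≥0∞ :=
  sSup {s : ℝ≥0∞ | s < p.1 ∧ ∀ t : ℝ≥0, (t : ℝ≥0∞) < s → p.2 t ≠ none}

/-- The retraction `ρ : H₀M X → H₀M X` onto `H X`. -/
noncomputable def rho {X : Type u} (p : Traj X) : Traj X :=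
  ((if ∀ t, p.2 t ≠ none then p.1 else ⊤),
    fun t =>
      if (t : ℝ≥0∞) ≤ dstar p then p.2 t
      else if ∀ t', p.2 t' ≠ none then p.2 (dstar p).toNNReal else none)

/-- The iterates `f⁽ⁿ⁾` of `f : X → H₀M (Y ⊕ X)`. -/
noncomputable def iter {X Y : Type u} (f : X → Traj (Y ⊕ X)) : ℕ → X → Traj Y
  | 0, _ => (0, fun _ => none)
  | n + 1, x => kl (Sum.elim eta (iter f n)) (f x)

/-- The least-fixpoint iteration `f^‡ x = ⊔ₙ f⁽ⁿ⁾ x`. -/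
noncomputable def iterStar {X Y : Type u} (f : X → Traj (Y ⊕ X)) (x : X) : Traj Y :=
  chainJoin fun n => iter f n x

/-- `f : X → H₊ (A ⊕ B)` is progressive in `B` (guarded in the second summand). -/
def Prog {X : Type u} {A B : Type v} (f : X → Traj (A ⊕ B)) : Prop :=
  ∀ x, ∃ a : A, (f x).2 0 = some (Sum.inl a)

/-- Kleisli composition of `H₀M` is monotone in the function argument. -/
theorem kl_monotone_fun {X : Type u} {Y : Type v} (f g : X → Traj Y)
    (hf : ∀ x, Flat (f x)) (hg : ∀ x, Flat (g x)) (hfg : ∀ x, TrajLE (f x) (g x))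
    (p : Traj X) (hp : Flat p) :
    TrajLE (kl f p) (kl g p) := by
  classical
  have hbind : ∀ t, ((p.2 t).bind fun x' => (f x').2 0) ≠ none →
      ((p.2 t).bind fun x' => (g x').2 0) = ((p.2 t).bind fun x' => (f x').2 0) := by
    intro t ht
    cases hpt : p.2 t with
    | none => simp [hpt] at ht
    | some x' =>
        simp only [hpt, Option.bind_some] at ht ⊢
        exact (hfg x').2.1 0 ht
  unfold kl
  by_cases hd : p.1 = ⊤
  · simp only [hd, if_pos rfl]
    exact ⟨le_rfl, fun t ht => hbind t ht, fun h => absurd rfl h⟩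
  · simp only [if_neg hd]
    cases hx : p.2 p.1.toNNReal with
    | none =>
        simp only
        refine ⟨le_rfl, fun t ht => hbind t ht, fun _ h => ?_⟩
        exact absurd (by simp [hx]) h
    | some x =>
        simp only
        refine ⟨add_le_add le_rfl (hfg x).1, ?_, ?_⟩
        · intro t ht
          by_cases hlt : (t : ℝ≥0∞) < p.1
          · simp only [if_pos hlt] at ht ⊢
            exact hbind t ht
          · simp only [if_neg hlt] at ht ⊢
            exact (hfg x).2.1 _ ht
        · intro htop hne
          have hfx : (f x).1 ≠ ⊤ := fun h => htop (by simp [h])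
          have hD : ((p.1 + (f x).1).toNNReal : ℝ≥0∞) = p.1 + (f x).1 :=
            ENNReal.coe_toNNReal htop
          have hnotlt : ¬ (((p.1 + (f x).1).toNNReal : ℝ≥0∞) < p.1) := by
            rw [hD]; exact not_lt.2 le_self_add
          simp only [if_neg hnotlt] at hne
          have harith : (p.1 + (f x).1).toNNReal - p.1.toNNReal = (f x).1.toNNReal := by
            rw [ENNReal.toNNReal_add hd hfx]
            simp
          rw [harith] at hne
          have := (hfg x).2.2 hfx hne
          rw [this]
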